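/- arXiv:1803.01103 — 2 statements merged into one kernel-verified Lean document; each statement's English description precedes it below -/
import Mathlib

section
/- Let f ∈ L¹(ℝ²) ∩ L^∞(ℝ²) and define z(x) = (1/2π) ∫_{ℝ²} f(y) · log(|x−y|/(1+|y|)) dy. Then lim_{|x|→∞} z(x)/log|x| = (1/2π) ∫_{ℝ²} f(y) dy. -/
open MeasureTheory Real Filter Metric

section Aux

local notation "E2" => EuclideanSpace ℝ (Fin 2)

lemma aux_logint : IntegrableOn (fun w : E2 => |Real.log ‖w‖|) (ball 0 1) volume := by
  have hmeas : Measurable fun w : E2 => |Real.log ‖w‖| :=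
    (Real.measurable_log.comp measurable_norm).abs
  refine ⟨hmeas.aestronglyMeasurable, ?_⟩
  rw [hasFiniteIntegral_iff_norm]
  have h1 : ∀ w : E2, ENNReal.ofReal ‖|Real.log ‖w‖|‖ = ENNReal.ofReal |Real.log ‖w‖| := by
    intro w; rw [Real.norm_eq_abs, abs_abs]
  simp_rw [h1]
  rw [lintegral_eq_lintegral_meas_le _ (Filter.Eventually.of_forall fun w => abs_nonneg _)
    (hmeas.aemeasurable)]
  have hsub : ∀ t : ℝ, 0 < t →
      (volume.restrict (ball (0:E2) 1)) {a | t ≤ |Real.log ‖a‖|}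
        ≤ ENNReal.ofReal (Real.exp (-t) ^ 2) * volume (ball (0:E2) 1) := by
    intro t ht
    rw [Measure.restrict_apply' measurableSet_ball]
    calc volume ({a : E2 | t ≤ |Real.log ‖a‖|} ∩ ball 0 1)
        ≤ volume (closedBall (0:E2) (Real.exp (-t))) := by
          apply measure_mono
          rintro a ⟨hta, hb⟩
          simp only [Set.mem_setOf_eq] at hta
          rw [mem_ball, dist_zero_right] at hb
          rw [mem_closedBall, dist_zero_right]
          have hlog : Real.log ‖a‖ ≤ 0 := Real.log_nonpos (norm_nonneg _) hb.le
          rw [abs_of_nonpos hlog] at hta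
          rcases eq_or_lt_of_le (norm_nonneg a) with h0 | h0
          · rw [← h0]; exact (Real.exp_pos _).le
          · calc ‖a‖ = Real.exp (Real.log ‖a‖) := (Real.exp_log h0).symm
              _ ≤ Real.exp (-t) := Real.exp_le_exp.mpr (by linarith)
      _ = ENNReal.ofReal (Real.exp (-t) ^ 2) * volume (ball (0:E2) 1) := by
          rw [Measure.addHaar_closedBall _ _ (Real.exp_nonneg _), finrank_euclideanSpace_fin]
  calc ∫⁻ t in Set.Ioi (0:ℝ), (volume.restrict (ball (0:E2) 1)) {a | t ≤ |Real.log ‖a‖|}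
      ≤ ∫⁻ t in Set.Ioi (0:ℝ), ENNReal.ofReal (Real.exp (-(1:ℝ) * t)) * volume (ball (0:E2) 1) := by
        refine setLIntegral_mono' measurableSet_Ioi fun t ht => ?_
        refine le_trans (hsub t ht) ?_
        gcongr
        have h2 : Real.exp (-t) ≤ 1 := Real.exp_le_one_iff.mpr (by linarith [Set.mem_Ioi.mp ht])
        calc Real.exp (-t) ^ 2 ≤ Real.exp (-t) ^ 1 :=
              pow_le_pow_of_le_one (Real.exp_nonneg _) h2 one_le_two
          _ = Real.exp (-(1:ℝ) * t) := by rw [pow_one]; ring_nf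
    _ = (∫⁻ t in Set.Ioi (0:ℝ), ENNReal.ofReal (Real.exp (-(1:ℝ) * t))) * volume (ball (0:E2) 1) := by
        rw [lintegral_mul_const'']
        exact (ENNReal.measurable_ofReal.comp (by fun_prop)).aemeasurable
    _ < ⊤ := ENNReal.mul_lt_top
        (exp_neg_integrableOn_Ioi 0 one_pos).lintegral_lt_top measure_ball_lt_top

lemma aux_trans (x : E2) :
    IntegrableOn (fun y : E2 => |Real.log ‖x - y‖|) (ball x 1) volume ∧
    ∫ y in ball x 1, |Real.log ‖x - y‖| = ∫ w in ball (0:E2) 1, |Real.log ‖w‖| := by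
  have hmp : MeasurePreserving (fun y : E2 => x - y) volume volume :=
    Measure.measurePreserving_sub_left volume x
  have hemb : MeasurableEmbedding (fun y : E2 => x - y) :=
    (Homeomorph.subLeft x).measurableEmbedding
  have hpre : (fun y : E2 => x - y) ⁻¹' (ball 0 1) = ball x 1 := by
    ext y; simp [mem_ball, dist_eq_norm, norm_sub_rev]
  constructor
  · have := ((hmp.restrict_preimage_emb hemb (ball 0 1)).integrable_comp_emb hemb).mpr aux_logint
    rwa [hpre] at this
  · have := hmp.setIntegral_preimage_emb hemb (fun w => |Real.log ‖w‖|) (ball 0 1)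
    rwa [hpre] at this

lemma aux_key_bound {a b t : ℝ} (ha : 0 ≤ a) (hb : 1 ≤ b) (ht : 4 ≤ t)
    (hab : a ≤ t + b - 1) (hby : b ≤ t + a + 1) :
    |Real.log (a / b) - Real.log t| ≤ 3 * Real.log t + (if a < 1 then |Real.log a| else 0) := by
  have ht0 : (0:ℝ) < t := by linarith
  have hlt : 0 ≤ Real.log t := Real.log_nonneg (by linarith)
  have hb0 : (0:ℝ) < b := by linarith
  by_cases hA : a < 1
  · rw [if_pos hA]
    have hbt : b ≤ t ^ 2 := by nlinarith
    have hlb : Real.log b ≤ 2 * Real.log t := by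
      calc Real.log b ≤ Real.log (t ^ 2) := Real.log_le_log hb0 hbt
        _ = 2 * Real.log t := by rw [Real.log_pow]; push_cast; ring
    rcases eq_or_lt_of_le ha with h0 | h0
    · rw [← h0]
      simp only [zero_div, Real.log_zero, zero_sub, abs_neg, abs_zero]
      rw [abs_of_nonneg hlt]; linarith
    · rw [Real.log_div (ne_of_gt h0) (ne_of_gt hb0), sub_sub]
      have hlbn : 0 ≤ Real.log b := Real.log_nonneg hb
      have h2 : |Real.log a - (Real.log b + Real.log t)|
          ≤ |Real.log a| + |Real.log b + Real.log t| := abs_sub _ _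
      have h3 : |Real.log b + Real.log t| = Real.log b + Real.log t :=
        abs_of_nonneg (by linarith)
      rw [h3] at h2
      linarith
  · rw [if_neg hA]
    push_neg at hA
    have ha0 : (0:ℝ) < a := by linarith
    have hup : Real.log (a / b) ≤ Real.log t := by
      apply Real.log_le_log (by positivity)
      rw [div_le_iff₀ hb0]; nlinarith
    have hlow : -(2 * Real.log t) ≤ Real.log (a / b) := by
      have h12 : (1:ℝ)/t^2 ≤ a / b := by
        rcases le_or_gt b (t^2) with hc | hc
        · calc (1:ℝ)/t^2 ≤ 1/b := one_div_le_one_div_of_le hb0 hc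
            _ ≤ a/b := by gcongr
        · have hba : b / 2 ≤ a := by nlinarith
          calc (1:ℝ)/t^2 ≤ 1/2 := by
                rw [div_le_div_iff₀ (by positivity) (by norm_num)]; nlinarith
            _ ≤ a/b := by rw [le_div_iff₀ hb0]; linarith
      calc -(2 * Real.log t) = Real.log (1 / t^2) := by
            rw [one_div, Real.log_inv, Real.log_pow]; push_cast; ring
        _ ≤ Real.log (a / b) := Real.log_le_log (by positivity) h12
    rw [abs_le]; constructor <;> linarith

lemma aux_compact_bound {a b t R : ℝ} (hR : 0 ≤ R) (hb1 : 1 ≤ b) (hbR : b ≤ 1 + R)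
    (ht : 2*R + 2 ≤ t) (ht4 : 4 ≤ t) (hal : t - R ≤ a) (hau : a ≤ t + R) :
    |Real.log (a / b) - Real.log t| ≤ Real.log (2 + 2*R) := by
  have ht0 : (0:ℝ) < t := by linarith
  have ha0 : (0:ℝ) < a := by linarith
  have hb0 : (0:ℝ) < b := by linarith
  have hup : Real.log (a/b) ≤ Real.log 2 + Real.log t := by
    calc Real.log (a/b) ≤ Real.log (2*t) := by
          apply Real.log_le_log (by positivity)
          rw [div_le_iff₀ hb0]; nlinarith
      _ = Real.log 2 + Real.log t := Real.log_mul (by norm_num) (ne_of_gt ht0)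
  have hlow : Real.log t - Real.log (2 + 2*R) ≤ Real.log (a/b) := by
    calc Real.log t - Real.log (2 + 2*R) = Real.log (t / (2 + 2*R)) :=
          (Real.log_div (ne_of_gt ht0) (by positivity)).symm
      _ ≤ Real.log (a/b) := by
          apply Real.log_le_log (by positivity)
          rw [div_le_div_iff₀ (by positivity) hb0]; nlinarith
  have h2 : Real.log 2 ≤ Real.log (2 + 2*R) := Real.log_le_log (by norm_num) (by linarith)
  rw [abs_le]; constructor <;> linarith

-- the pointwise bound in geometric form
lemma aux_geom_bound (x y : E2) (ht : 4 ≤ ‖x‖) :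
    |Real.log (‖x - y‖ / (1 + ‖y‖)) - Real.log ‖x‖|
      ≤ 3 * Real.log ‖x‖ + (ball x 1).indicator (fun y => |Real.log ‖x - y‖|) y := by
  have hind : (ball x 1).indicator (fun y => |Real.log ‖x - y‖|) y
      = if ‖x - y‖ < 1 then |Real.log ‖x - y‖| else 0 := by
    classical
    rw [Set.indicator_apply]
    exact if_congr (by simp [mem_ball, dist_eq_norm, norm_sub_rev]) rfl rfl
  rw [hind]
  refine aux_key_bound (norm_nonneg _) (by linarith [norm_nonneg y]) ht ?_ ?_
  · have := norm_sub_le x y; linarith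
  · have : ‖y‖ ≤ ‖x‖ + ‖x - y‖ := by
      calc ‖y‖ = ‖x - (x - y)‖ := by congr 1; abel
        _ ≤ ‖x‖ + ‖x - y‖ := norm_sub_le _ _
    linarith

lemma aux_tail {f : E2 → ℝ} (hf1 : Integrable f) {ε : ℝ} (hε : 0 < ε) :
    ∃ R : ℝ, 0 ≤ R ∧ ∫ y in (closedBall (0:E2) R)ᶜ, |f y| < ε := by
  have hmono : Monotone fun n : ℕ => closedBall (0:E2) n := fun m n hmn =>
    closedBall_subset_closedBall (by exact_mod_cast hmn)
  have hunion : (⋃ n : ℕ, closedBall (0:E2) n) = Set.univ := by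
    ext y; simp only [Set.mem_iUnion, Set.mem_univ, iff_true, mem_closedBall, dist_zero_right]
    obtain ⟨n, hn⟩ := exists_nat_ge ‖y‖
    exact ⟨n, hn⟩
  have htend := tendsto_setIntegral_of_monotone (fun n : ℕ => measurableSet_closedBall)
    hmono (by rw [hunion]; exact hf1.abs.integrableOn)
  rw [hunion, setIntegral_univ] at htend
  have := htend.eventually (eventually_gt_nhds (by linarith : (∫ y, |f y|) - ε < ∫ y, |f y|))
  obtain ⟨n, hn⟩ := this.exists
  refine ⟨n, Nat.cast_nonneg n, ?_⟩
  have hsplit := integral_add_compl (measurableSet_closedBall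
    (x := (0:E2)) (ε := (n:ℝ))) hf1.abs
  linarith
end Aux

set_option maxHeartbeats 2000000 in
theorem stmt_1
    (f : EuclideanSpace ℝ (Fin 2) → ℝ)
    (hf1 : Integrable f)
    (Cf : ℝ) (hfbdd : ∀ᵐ y, |f y| ≤ Cf)
    (z : EuclideanSpace ℝ (Fin 2) → ℝ)
    (hz : ∀ x, z x = (1 / (2 * π)) * ∫ y, f y * Real.log (‖x - y‖ / (1 + ‖y‖))) :
    Tendsto (fun x => z x / Real.log ‖x‖)
      (Filter.cocompact (EuclideanSpace ℝ (Fin 2)))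
      (nhds ((1 / (2 * π)) * ∫ y, f y)) := by
  set c : ℝ := 1 / (2 * π) with hc
  have hc0 : 0 < c := by positivity
  set I : ℝ := ∫ y, f y with hI
  set Cf' : ℝ := max Cf 0 with hCf'
  have hCf'0 : 0 ≤ Cf' := le_max_right _ _
  have hfb' : ∀ᵐ y, |f y| ≤ Cf' := hfbdd.mono fun y hy => hy.trans (le_max_left _ _)
  set L₁ : ℝ := ∫ w in ball (0:EuclideanSpace ℝ (Fin 2)) 1, |Real.log ‖w‖| with hL₁
  have hL₁0 : 0 ≤ L₁ := setIntegral_nonneg measurableSet_ball fun w _ => abs_nonneg _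
  set N : ℝ := ∫ y, |f y| with hN
  have hN0 : 0 ≤ N := integral_nonneg fun y => abs_nonneg _
  -- notation
  set g : EuclideanSpace ℝ (Fin 2) → EuclideanSpace ℝ (Fin 2) → ℝ :=
    fun x y => Real.log (‖x - y‖ / (1 + ‖y‖)) with hg
  -- measurability
  have hgmeas : ∀ x, Measurable (fun y : EuclideanSpace ℝ (Fin 2) => g x y) := by
    intro x
    apply Real.measurable_log.comp
    exact ((measurable_const.sub measurable_id).norm).div
      (measurable_const.add measurable_norm)
  have hgsm : ∀ x, AEStronglyMeasurable
      (fun y : EuclideanSpace ℝ (Fin 2) => f y * (g x y - Real.log ‖x‖)) volume := by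
    intro x
    exact hf1.aestronglyMeasurable.mul
      ((hgmeas x).sub measurable_const).aestronglyMeasurable
  -- dominating function
  set D : EuclideanSpace ℝ (Fin 2) → EuclideanSpace ℝ (Fin 2) → ℝ :=
    fun x y => (3 * Real.log ‖x‖) * |f y|
      + Cf' * (ball x 1).indicator (fun y => |Real.log ‖x - y‖|) y with hD
  have hDint : ∀ x, Integrable (D x) := by
    intro x
    exact (hf1.abs.const_mul _).add
      (((aux_trans x).1.integrable_indicator measurableSet_ball).const_mul _)
  have hDbd : ∀ x, 4 ≤ ‖x‖ → ∀ᵐ y,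
      |f y * (g x y - Real.log ‖x‖)| ≤ D x y := by
    intro x hx
    filter_upwards [hfb'] with y hy
    have hind0 : 0 ≤ (ball x 1).indicator
        (fun y : EuclideanSpace ℝ (Fin 2) => |Real.log ‖x - y‖|) y :=
      Set.indicator_nonneg (fun _ _ => abs_nonneg _) y
    have hbd := aux_geom_bound x y hx
    have hlt : 0 ≤ Real.log ‖x‖ := Real.log_nonneg (by linarith)
    calc |f y * (g x y - Real.log ‖x‖)| = |f y| * |g x y - Real.log ‖x‖| := abs_mul _ _
      _ ≤ |f y| * (3 * Real.log ‖x‖) + Cf' * (ball x 1).indicator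
            (fun y => |Real.log ‖x - y‖|) y := by
          have h1 : |f y| * |g x y - Real.log ‖x‖|
              ≤ |f y| * (3 * Real.log ‖x‖ + (ball x 1).indicator
                (fun y => |Real.log ‖x - y‖|) y) :=
            mul_le_mul_of_nonneg_left hbd (abs_nonneg _)
          have h2 : |f y| * (ball x 1).indicator (fun y => |Real.log ‖x - y‖|) y
              ≤ Cf' * (ball x 1).indicator (fun y => |Real.log ‖x - y‖|) y :=
            mul_le_mul_of_nonneg_right hy hind0
          nlinarith [abs_nonneg (f y)]
      _ = D x y := by rw [hD]; ring_nf
  -- integrability of the integrands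
  have hint1 : ∀ x, 4 ≤ ‖x‖ →
      Integrable (fun y => f y * (g x y - Real.log ‖x‖)) := by
    intro x hx
    refine Integrable.mono' (hDint x) (hgsm x) ?_
    filter_upwards [hDbd x hx] with y hy
    rwa [Real.norm_eq_abs]
  have hint2 : ∀ x, 4 ≤ ‖x‖ → Integrable (fun y => f y * g x y) := by
    intro x hx
    have heq : (fun y => f y * g x y)
        = fun y => f y * (g x y - Real.log ‖x‖) + Real.log ‖x‖ * f y := by
      funext y; ring
    rw [heq]
    exact (hint1 x hx).add (hf1.const_mul _)
  -- the algebraic identity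
  have hkey : ∀ x, 4 ≤ ‖x‖ →
      z x / Real.log ‖x‖ - c * I
        = (c / Real.log ‖x‖) * ∫ y, f y * (g x y - Real.log ‖x‖) := by
    intro x hx
    have hlogpos : 0 < Real.log ‖x‖ := Real.log_pos (by linarith)
    have hsub : ∫ y, f y * (g x y - Real.log ‖x‖)
        = (∫ y, f y * g x y) - (Real.log ‖x‖) * I := by
      have heq : (fun y => f y * (g x y - Real.log ‖x‖))
          = fun y => f y * g x y - Real.log ‖x‖ * f y := by funext y; ring
      rw [heq, integral_sub (hint2 x hx) (hf1.const_mul _), integral_const_mul]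
    rw [hsub, hz x]
    field_simp
    ring
  -- the quantitative bound
  rw [Metric.tendsto_nhds]
  intro ε hε
  obtain ⟨R, hR0, hRtail⟩ := aux_tail hf1 (show (0:ℝ) < ε / (6 * c) by positivity)
  set K : ℝ := c * (Real.log (2 + 2*R) * N + Cf' * L₁) with hK
  have hlog2R : 0 ≤ Real.log (2 + 2*R) := Real.log_nonneg (by linarith)
  have hK0 : 0 ≤ K :=
    mul_nonneg hc0.le (add_nonneg (mul_nonneg hlog2R hN0) (mul_nonneg hCf'0 hL₁0))
  set M : ℝ := max (max 4 (2*R + 2)) (Real.exp (2*K/ε + 1)) with hM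
  filter_upwards [tendsto_norm_cocompact_atTop.eventually_ge_atTop M] with x hx
  have hx4 : 4 ≤ ‖x‖ := le_trans (le_trans (le_max_left _ _) (le_max_left _ _)) hx
  have hxR : 2*R + 2 ≤ ‖x‖ := le_trans (le_trans (le_max_right _ _) (le_max_left _ _)) hx
  have hlogx : 2*K/ε + 1 ≤ Real.log ‖x‖ := by
    calc 2*K/ε + 1 = Real.log (Real.exp (2*K/ε + 1)) := (Real.log_exp _).symm
      _ ≤ Real.log ‖x‖ := Real.log_le_log (Real.exp_pos _) (le_trans (le_max_right _ _) hx)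
  have hlogpos : 0 < Real.log ‖x‖ := by
    have h0 : 0 ≤ 2*K/ε := div_nonneg (by linarith) hε.le
    linarith
  -- estimate the integral
  have hplit : ∫ y, |f y * (g x y - Real.log ‖x‖)|
      = (∫ y in closedBall (0:EuclideanSpace ℝ (Fin 2)) R, |f y * (g x y - Real.log ‖x‖)|)
      + ∫ y in (closedBall (0:EuclideanSpace ℝ (Fin 2)) R)ᶜ, |f y * (g x y - Real.log ‖x‖)| :=
    (integral_add_compl measurableSet_closedBall (hint1 x hx4).abs).symm
  have hbound1 : (∫ y in closedBall (0:EuclideanSpace ℝ (Fin 2)) R,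
      |f y * (g x y - Real.log ‖x‖)|) ≤ Real.log (2 + 2*R) * N := by
    calc (∫ y in closedBall (0:EuclideanSpace ℝ (Fin 2)) R, |f y * (g x y - Real.log ‖x‖)|)
        ≤ ∫ y in closedBall (0:EuclideanSpace ℝ (Fin 2)) R, Real.log (2 + 2*R) * |f y| := by
          refine setIntegral_mono_on (hint1 x hx4).abs.integrableOn
            (hf1.abs.const_mul _).integrableOn measurableSet_closedBall fun y hy => ?_
          rw [mem_closedBall, dist_zero_right] at hy
          have hb : |g x y - Real.log ‖x‖| ≤ Real.log (2 + 2*R) := by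
            refine aux_compact_bound hR0 (by linarith [norm_nonneg y]) (by linarith) hxR hx4 ?_ ?_
            · have := norm_sub_norm_le x y; linarith
            · have := norm_sub_le x y; linarith
          rw [abs_mul]
          calc |f y| * |g x y - Real.log ‖x‖| ≤ |f y| * Real.log (2 + 2*R) :=
                mul_le_mul_of_nonneg_left hb (abs_nonneg _)
            _ = Real.log (2 + 2*R) * |f y| := mul_comm _ _
      _ = Real.log (2 + 2*R) * ∫ y in closedBall (0:EuclideanSpace ℝ (Fin 2)) R, |f y| :=
          integral_const_mul _ _
      _ ≤ Real.log (2 + 2*R) * N := by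
          refine mul_le_mul_of_nonneg_left ?_ hlog2R
          exact setIntegral_le_integral hf1.abs
            (Filter.Eventually.of_forall fun y => abs_nonneg _)
  have hbound2 : (∫ y in (closedBall (0:EuclideanSpace ℝ (Fin 2)) R)ᶜ,
      |f y * (g x y - Real.log ‖x‖)|)
      ≤ 3 * Real.log ‖x‖ * (ε / (6 * c)) + Cf' * L₁ := by
    have hstep : (∫ y in (closedBall (0:EuclideanSpace ℝ (Fin 2)) R)ᶜ,
        |f y * (g x y - Real.log ‖x‖)|)
        ≤ ∫ y in (closedBall (0:EuclideanSpace ℝ (Fin 2)) R)ᶜ, D x y := by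
      refine setIntegral_mono_ae_restrict (hint1 x hx4).abs.integrableOn
        (hDint x).integrableOn (ae_restrict_of_ae (hDbd x hx4))
    refine hstep.trans ?_
    have hsplitD : (∫ y in (closedBall (0:EuclideanSpace ℝ (Fin 2)) R)ᶜ, D x y)
        = (3 * Real.log ‖x‖) * (∫ y in (closedBall (0:EuclideanSpace ℝ (Fin 2)) R)ᶜ, |f y|)
        + Cf' * ∫ y in (closedBall (0:EuclideanSpace ℝ (Fin 2)) R)ᶜ,
            (ball x 1).indicator (fun y => |Real.log ‖x - y‖|) y := by
      rw [hD]
      rw [integral_add ((hf1.abs.const_mul _).integrableOn)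
        ((((aux_trans x).1.integrable_indicator measurableSet_ball).const_mul _).integrableOn),
        integral_const_mul, integral_const_mul]
    rw [hsplitD]
    have h2a : (∫ y in (closedBall (0:EuclideanSpace ℝ (Fin 2)) R)ᶜ, |f y|) ≤ ε / (6 * c) :=
      hRtail.le
    have h2b : (∫ y in (closedBall (0:EuclideanSpace ℝ (Fin 2)) R)ᶜ,
        (ball x 1).indicator (fun y => |Real.log ‖x - y‖|) y) ≤ L₁ := by
      calc (∫ y in (closedBall (0:EuclideanSpace ℝ (Fin 2)) R)ᶜ,
          (ball x 1).indicator (fun y => |Real.log ‖x - y‖|) y)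
          ≤ ∫ y, (ball x 1).indicator (fun y => |Real.log ‖x - y‖|) y :=
            setIntegral_le_integral ((aux_trans x).1.integrable_indicator measurableSet_ball)
              (Filter.Eventually.of_forall fun y =>
                Set.indicator_nonneg (fun _ _ => abs_nonneg _) y)
        _ = ∫ y in ball x 1, |Real.log ‖x - y‖| := integral_indicator measurableSet_ball
        _ = L₁ := (aux_trans x).2
    have hlx : 0 ≤ 3 * Real.log ‖x‖ := by positivity
    nlinarith
  -- put everything together
  rw [Real.dist_eq, hkey x hx4]
  have habs : |(c / Real.log ‖x‖) * ∫ y, f y * (g x y - Real.log ‖x‖)|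
      ≤ (c / Real.log ‖x‖) * ((Real.log (2 + 2*R) * N + Cf' * L₁)
          + 3 * Real.log ‖x‖ * (ε / (6 * c))) := by
    rw [abs_mul, abs_of_nonneg (div_nonneg hc0.le hlogpos.le)]
    refine mul_le_mul_of_nonneg_left ?_ (div_nonneg hc0.le hlogpos.le)
    calc |∫ y, f y * (g x y - Real.log ‖x‖)| ≤ ∫ y, |f y * (g x y - Real.log ‖x‖)| := by
          have h := norm_integral_le_integral_norm (μ := volume)
            (fun y => f y * (g x y - Real.log ‖x‖))
          simp only [Real.norm_eq_abs] at h
          exact h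
      _ ≤ (Real.log (2 + 2*R) * N + Cf' * L₁) + 3 * Real.log ‖x‖ * (ε / (6 * c)) := by
          rw [hplit]; linarith
  refine lt_of_le_of_lt habs ?_
  have hlne : Real.log ‖x‖ ≠ 0 := ne_of_gt hlogpos
  have hcne : c ≠ 0 := ne_of_gt hc0
  have hexp : (c / Real.log ‖x‖) * ((Real.log (2 + 2*R) * N + Cf' * L₁)
      + 3 * Real.log ‖x‖ * (ε / (6 * c)))
      = K / Real.log ‖x‖ + ε / 2 := by
    rw [hK]; field_simp; ring
  rw [hexp]
  have hKle : K / Real.log ‖x‖ < ε / 2 := by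
    have hb0 : (0:ℝ) < 2*K/ε + 1 := by
      have h0 : 0 ≤ 2*K/ε := div_nonneg (by linarith) hε.le
      linarith
    have h1 : K / Real.log ‖x‖ ≤ K / (2*K/ε + 1) :=
      div_le_div_of_nonneg_left hK0 hb0 hlogx
    have h2 : K / (2*K/ε + 1) < ε / 2 := by
      rw [div_lt_iff₀ hb0]
      have hεne : ε ≠ 0 := ne_of_gt hε
      have hid : ε / 2 * (2*K/ε + 1) = K + ε / 2 := by
        field_simp
      rw [hid]
      linarith
    linarith
  linarith
end

section
/- Let φ : ℝ² → ℝ be harmonic on all of ℝ² and suppose there is a constant C₁ > 0 such that φ(x) ≤ C₁(1 + log|x|) for all x ∈ ℝ² with |x| ≥ 1. Then φ is constant. -/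
open Real Metric Set Filter Finset Complex
open scoped Topology NNReal ENNReal

set_option maxHeartbeats 1000000


lemma exists_primitive {f : ℂ → ℂ} (hf : Differentiable ℂ f) :
    ∃ F : ℂ → ℂ, F 0 = 0 ∧ ∀ z, HasDerivAt F (f z) z := by
  obtain ⟨p, hp⟩ : ∃ p, HasFPowerSeriesOnBall f p 0 ∞ :=
    ⟨_, hf.hasFPowerSeriesOnBall 0 one_pos⟩
  set a : ℕ → ℂ := fun n => p.coeff n with ha
  -- summability of coefficient norms times powers
  have hsum : ∀ r : ℝ≥0, Summable (fun n => ‖a n‖ * (r:ℝ) ^ n) := by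
    intro r
    have hrad : p.radius = ⊤ := eq_top_iff.mpr hp.r_le
    have h1 : Summable (fun n => ‖p n‖ * (r:ℝ) ^ n) :=
      p.summable_norm_mul_pow (by rw [hrad]; exact lt_top_iff_ne_top.2 (by simp))
    refine h1.of_nonneg_of_le (fun n => by positivity) fun n => ?_
    have : ‖a n‖ ≤ ‖p n‖ := by
      calc ‖a n‖ = ‖p n fun _ => (1:ℂ)‖ := rfl
        _ ≤ ‖p n‖ * ∏ _i : Fin n, ‖(1:ℂ)‖ := (p n).le_opNorm _
        _ = ‖p n‖ := by simp
    exact mul_le_mul_of_nonneg_right this (by positivity)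
  set F : ℂ → ℂ := fun z => ∑' n, (a n / (n + 1)) * z ^ (n + 1) with hF
  have hFsummable : ∀ z : ℂ, Summable (fun n => (a n / (n + 1)) * z ^ (n + 1)) := by
    intro z
    obtain ⟨r, hr⟩ : ∃ r : ℝ≥0, ‖z‖ ≤ r := ⟨⟨‖z‖, norm_nonneg z⟩, le_refl _⟩
    refine Summable.of_norm_bounded (((hsum r).mul_left (r:ℝ))) fun n => ?_
    have hn1 : (1:ℝ) ≤ ‖((n:ℂ) + 1)‖ := by
      rw [show ((n:ℂ) + 1) = ((n+1 : ℕ) : ℂ) by push_cast; ring]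
      rw [Complex.norm_natCast]
      exact_mod_cast Nat.one_le_iff_ne_zero.2 (Nat.succ_ne_zero n)
    calc ‖a n / (n + 1) * z ^ (n + 1)‖ = ‖a n‖ / ‖((n:ℂ)+1)‖ * ‖z‖ ^ (n+1) := by
          rw [norm_mul, norm_div, norm_pow]
      _ ≤ ‖a n‖ * ‖z‖ ^ (n + 1) := by
          gcongr
          exact div_le_self (norm_nonneg _) hn1
      _ ≤ ‖a n‖ * ((r:ℝ) ^ (n+1)) := by
          gcongr
      _ = (r:ℝ) * (‖a n‖ * (r:ℝ) ^ n) := by ring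
  refine ⟨F, ?_, ?_⟩
  · simp [hF]
  intro z
  set R : ℝ≥0 := ⟨‖z‖ + 1, by positivity⟩ with hRdef
  have hzR : z ∈ ball (0:ℂ) R := by
    simp only [mem_ball, dist_zero_right]
    change ‖z‖ < ‖z‖ + 1
    linarith
  have hps : ∀ (N : ℕ) (w : ℂ), p.partialSum N w = ∑ n ∈ range N, a n * w ^ n := by
    intro N w
    simp only [FormalMultilinearSeries.partialSum]
    refine Finset.sum_congr rfl fun n _ => ?_
    rw [FormalMultilinearSeries.apply_eq_pow_smul_coeff, smul_eq_mul]; ring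
  have hunif : TendstoUniformlyOn (fun N z => ∑ n ∈ range N, a n * z ^ n) f atTop (ball 0 R) := by
    have h0 := hp.tendstoUniformlyOn (r' := R) (lt_top_iff_ne_top.2 (by simp))
    simp only [zero_add, hps] at h0
    exact h0
  have hderiv : ∀ N : ℕ, ∀ w : ℂ, w ∈ ball (0:ℂ) R →
      HasDerivAt (fun z => ∑ n ∈ range N, (a n / (n + 1)) * z ^ (n + 1))
        (∑ n ∈ range N, a n * w ^ n) w := by
    intro N w _
    have : ∀ n ∈ range N, HasDerivAt (fun z : ℂ => (a n / (n + 1)) * z ^ (n + 1))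
        (a n * w ^ n) w := by
      intro n _
      have h1 : HasDerivAt (fun z : ℂ => z ^ (n+1)) (((n:ℂ)+1) * w ^ n) w := by
        simpa using hasDerivAt_pow (n+1) w
      have h2 := h1.const_mul (a n / (n + 1))
      have hne : ((n:ℂ)+1) ≠ 0 := Nat.cast_add_one_ne_zero n
      rw [show a n * w ^ n = a n / (n + 1) * ((n + 1) * w ^ n) by
        rw [← mul_assoc, div_mul_cancel₀ _ hne]]
      exact h2
    exact HasDerivAt.fun_sum this
  have hpt : ∀ w : ℂ, w ∈ ball (0:ℂ) R →
      Tendsto (fun N => ∑ n ∈ range N, (a n / (n + 1)) * w ^ (n + 1)) atTop (𝓝 (F w)) :=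
    fun w _ => (hFsummable w).hasSum.tendsto_sum_nat
  exact hasDerivAt_of_tendstoUniformlyOn isOpen_ball hunif (Filter.Eventually.of_forall hderiv) hpt hzR

-- ext lemma for real-linear maps out of ℂ
lemma clm_ext_complex {M : Type*} [NormedAddCommGroup M] [NormedSpace ℝ M]
    {T S : ℂ →L[ℝ] M} (h1 : T 1 = S 1) (hI : T I = S I) : T = S := by
  ext z
  have hz : z = z.re • (1:ℂ) + z.im • I := by
    simp [Complex.real_smul]
  rw [hz]
  simp only [map_add, map_smul, h1, hI]

lemma key {u : ℂ → ℝ} (hu : ContDiff ℝ 2 u)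
    (hharm : ∀ z, fderiv ℝ (fun w => fderiv ℝ u w 1) z 1
      + fderiv ℝ (fun w => fderiv ℝ u w I) z I = 0)
    {C₁ : ℝ} (hC₁ : 0 < C₁)
    (hgrowth : ∀ z : ℂ, 1 ≤ ‖z‖ → u z ≤ C₁ * (1 + Real.log ‖z‖)) :
    ∀ z, u z = u 0 := by
  have hudiff : Differentiable ℝ u := hu.differentiable (by norm_num)
  have hud : ContDiff ℝ 1 (fderiv ℝ u) := hu.fderiv_right (le_refl _)
  have hud_diff : Differentiable ℝ (fderiv ℝ u) := hud.differentiable (by norm_num)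
  set ux : ℂ → ℝ := fun w => fderiv ℝ u w 1 with hux_def
  set uy : ℂ → ℝ := fun w => fderiv ℝ u w I with huy_def
  -- second derivative facts
  have heval : ∀ (v : ℂ) (z : ℂ), HasFDerivAt (fun w => fderiv ℝ u w v)
      ((ContinuousLinearMap.apply ℝ ℝ v).comp (fderiv ℝ (fderiv ℝ u) z)) z := by
    intro v z
    exact (ContinuousLinearMap.apply ℝ ℝ v).hasFDerivAt.comp z (hud_diff z).hasFDerivAt
  have hsymm : ∀ z v w, fderiv ℝ (fderiv ℝ u) z v w = fderiv ℝ (fderiv ℝ u) z w v := by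
    intro z v w
    exact second_derivative_symmetric (fun y => (hudiff y).hasFDerivAt)
      (hud_diff z).hasFDerivAt v w
  set f : ℂ → ℂ := fun w => ux w • (1:ℂ) - uy w • I with hf_def
  -- f is entire
  have hfD : ∀ z : ℂ, HasFDerivAt f
      ((fderiv ℝ (fderiv ℝ u) z 1 1 - fderiv ℝ (fderiv ℝ u) z 1 I • I)
        • (1 : ℂ →L[ℂ] ℂ)) z := by
    intro z
    set A := (ContinuousLinearMap.apply ℝ ℝ (1:ℂ)).comp (fderiv ℝ (fderiv ℝ u) z) with hA
    set B := (ContinuousLinearMap.apply ℝ ℝ I).comp (fderiv ℝ (fderiv ℝ u) z) with hB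
    have hL : HasFDerivAt f (A.smulRight (1:ℂ) - B.smulRight I) z :=
      ((heval 1 z).smul_const (1:ℂ)).sub ((heval I z).smul_const I)
    refine hasFDerivAt_of_restrictScalars ℝ hL ?_
    refine clm_ext_complex ?_ ?_
    · simp only [ContinuousLinearMap.coe_restrictScalars', ContinuousLinearMap.smul_apply,
        ContinuousLinearMap.one_apply, ContinuousLinearMap.sub_apply,
        ContinuousLinearMap.smulRight_apply, ContinuousLinearMap.coe_comp', Function.comp_apply,
        ContinuousLinearMap.apply_apply, hA, hB]
      push_cast
      simp [Complex.ext_iff]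
    · simp only [ContinuousLinearMap.coe_restrictScalars', ContinuousLinearMap.smul_apply,
        ContinuousLinearMap.one_apply, ContinuousLinearMap.sub_apply,
        ContinuousLinearMap.smulRight_apply, ContinuousLinearMap.coe_comp', Function.comp_apply,
        ContinuousLinearMap.apply_apply, hA, hB]
      have h1 : fderiv ℝ (fderiv ℝ u) z I 1 = fderiv ℝ (fderiv ℝ u) z 1 I := hsymm z I 1
      have h2 : fderiv ℝ (fderiv ℝ u) z 1 1 + fderiv ℝ (fderiv ℝ u) z I I = 0 := by
        have := hharm z
        rwa [(heval 1 z).fderiv, (heval I z).fderiv] at this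
      have h2' : fderiv ℝ (fderiv ℝ u) z I I = - fderiv ℝ (fderiv ℝ u) z 1 1 := by linarith
      rw [h1, h2']
      set s1 := fderiv ℝ (fderiv ℝ u) z 1 1
      set s2 := fderiv ℝ (fderiv ℝ u) z 1 I
      simp only [Complex.real_smul, smul_eq_mul]
      push_cast
      ring_nf
      simp [Complex.ext_iff]
  have hfdiff : Differentiable ℂ f := fun z => (hfD z).differentiableAt
  obtain ⟨F, hF0, hFderiv⟩ := exists_primitive hfdiff
  -- Re ∘ F has the same derivative as u
  have hReF : ∀ z, HasFDerivAt (fun w => (F w).re) (fderiv ℝ u z) z := by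
    intro z
    have h1 : HasFDerivAt F (ContinuousLinearMap.smulRight (1 : ℂ →L[ℂ] ℂ) (f z)) z :=
      (hFderiv z).hasFDerivAt
    have h2 := Complex.reCLM.hasFDerivAt.comp z (h1.restrictScalars ℝ)
    refine h2.congr_fderiv ?_
    refine clm_ext_complex ?_ ?_
    · simp [hf_def, Complex.real_smul, hux_def]
    · simp [hf_def, Complex.real_smul, Complex.ext_iff, huy_def]
  have hcomp : ∀ z, u z - (F z).re = u 0 := by
    have hg : ∀ z, HasFDerivAt (fun z => u z - (F z).re) (0 : ℂ →L[ℝ] ℝ) z := by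
      intro z
      have := (hudiff z).hasFDerivAt.sub (hReF z)
      rw [sub_self] at this
      exact this
    have := is_const_of_fderiv_eq_zero (𝕜 := ℝ) (fun z => (hg z).differentiableAt)
      (fun z => (hg z).fderiv)
    intro z
    simpa [hF0] using this z 0
  have hReF_eq : ∀ z, (F z).re = u z - u 0 := fun z => by have := hcomp z; linarith
  set c₂ : ℝ := (2 * C₁)⁻¹ with hc₂_def
  have hc₂ : 0 < c₂ := by positivity
  set h : ℂ → ℂ := fun z => Complex.exp ((c₂ : ℂ) * F z) with hh_def
  have hhd : ∀ z, HasDerivAt h ((c₂ : ℂ) * f z * h z) z := by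
    intro z
    have := ((hFderiv z).const_mul (c₂ : ℂ)).cexp
    refine this.congr_deriv ?_
    simp only [hh_def]
    ring
  have hhdiff : Differentiable ℂ h := fun z => (hhd z).differentiableAt
  set K : ℝ := Real.exp (c₂ * |u 0| + 1/2) with hK_def
  have hK0 : 0 < K := Real.exp_pos _
  have hbound : ∀ z : ℂ, 1 ≤ ‖z‖ → ‖h z‖ ≤ K * ‖z‖ ^ ((1:ℝ)/2) := by
    intro z hz
    have hznorm : (0:ℝ) < ‖z‖ := by linarith
    rw [hh_def]
    rw [Complex.norm_exp]
    have hre : ((c₂:ℂ) * F z).re = c₂ * (u z - u 0) := by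
      simp [Complex.mul_re, hReF_eq z]
    rw [hre]
    have hlog : 0 ≤ Real.log ‖z‖ := Real.log_nonneg hz
    have h3 : c₂ * C₁ = 1/2 := by rw [hc₂_def]; field_simp
    have hmain : c₂ * (u z - u 0) ≤ c₂ * |u 0| + 1/2 + (1/2) * Real.log ‖z‖ := by
      have h1 : u z ≤ C₁ * (1 + Real.log ‖z‖) := hgrowth z hz
      nlinarith [neg_abs_le (u 0), hc₂.le]
    calc Real.exp (c₂ * (u z - u 0))
        ≤ Real.exp (c₂ * |u 0| + 1/2 + (1/2) * Real.log ‖z‖) := Real.exp_le_exp.2 hmain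
      _ = K * ‖z‖ ^ ((1:ℝ)/2) := by
          rw [Real.exp_add, Real.rpow_def_of_pos hznorm, hK_def]
          rw [mul_comm (Real.log ‖z‖) ((1:ℝ)/2)]
  have hfzero : ∀ z₀ : ℂ, f z₀ = 0 := by
    intro z₀
    have hest : ∀ R : ℝ, ‖z₀‖ + 1 ≤ R → ‖deriv h z₀‖ ≤ K * (2*R) ^ ((1:ℝ)/2) / R := by
      intro R hR
      have hR0 : 0 < R := by have := norm_nonneg z₀; linarith
      refine Complex.norm_deriv_le_of_forall_mem_sphere_norm_le hR0
        hhdiff.diffContOnCl ?_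
      intro z hz
      have hdist : dist z z₀ = R := mem_sphere.mp hz
      have hz1 : 1 ≤ ‖z‖ := by
        have h6 : ‖z - z₀‖ ≤ ‖z‖ + ‖z₀‖ := norm_sub_le _ _
        rw [← dist_eq_norm, hdist] at h6
        linarith
      have hz2 : ‖z‖ ≤ 2 * R := by
        have : ‖z‖ ≤ ‖z - z₀‖ + ‖z₀‖ := by
          simpa using norm_add_le (z - z₀) z₀
        rw [← dist_eq_norm, hdist] at this
        linarith
      calc ‖h z‖ ≤ K * ‖z‖ ^ ((1:ℝ)/2) := hbound z hz1
        _ ≤ K * (2*R) ^ ((1:ℝ)/2) :=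
            mul_le_mul_of_nonneg_left
              (Real.rpow_le_rpow (norm_nonneg z) hz2 (by norm_num)) hK0.le
    have hlim : Tendsto (fun R : ℝ => K * (2*R) ^ ((1:ℝ)/2) / R) atTop (𝓝 0) := by
      have h1 : Tendsto (fun R : ℝ => (K * 2 ^ ((1:ℝ)/2)) * R ^ (-((1:ℝ)/2))) atTop (𝓝 0) := by
        have := (tendsto_rpow_neg_atTop (by norm_num : (0:ℝ) < 1/2)).const_mul
          (K * 2 ^ ((1:ℝ)/2))
        simpa using this
      refine h1.congr' ?_
      filter_upwards [eventually_ge_atTop (1:ℝ)] with R hR1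
      have hR0 : (0:ℝ) < R := by linarith
      rw [Real.mul_rpow (by norm_num) hR0.le]
      rw [Real.rpow_neg hR0.le]
      rw [eq_div_iff hR0.ne']
      have hRhalf : R ^ ((1:ℝ)/2) * (R ^ ((1:ℝ)/2))⁻¹ = 1 := by
        refine mul_inv_cancel₀ ?_
        positivity
      have hRR : (R ^ ((1:ℝ)/2)) * (R ^ ((1:ℝ)/2)) = R := by
        rw [← Real.rpow_add hR0]
        norm_num
      calc K * 2 ^ ((1:ℝ)/2) * (R ^ ((1:ℝ)/2))⁻¹ * R
          = K * 2 ^ ((1:ℝ)/2) * ((R ^ ((1:ℝ)/2))⁻¹ * (R ^ ((1:ℝ)/2) * R ^ ((1:ℝ)/2))) := by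
            rw [hRR]; ring
        _ = K * 2 ^ ((1:ℝ)/2) * R ^ ((1:ℝ)/2) := by
            rw [← mul_assoc (R ^ ((1:ℝ)/2))⁻¹, inv_mul_cancel₀ (by positivity), one_mul]
        _ = K * (2 ^ ((1:ℝ)/2) * R ^ ((1:ℝ)/2)) := by ring
    have hle : ‖deriv h z₀‖ ≤ 0 :=
      ge_of_tendsto hlim (eventually_atTop.2 ⟨‖z₀‖ + 1, hest⟩)
    have hder0 : deriv h z₀ = 0 := norm_le_zero_iff.1 hle
    have hd := (hhd z₀).deriv
    rw [hder0] at hd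
    have hexp : h z₀ ≠ 0 := Complex.exp_ne_zero _
    have hc₂' : (c₂ : ℂ) ≠ 0 := by
      simpa using hc₂.ne'
    rcases mul_eq_zero.mp hd.symm with h5 | h5
    · rcases mul_eq_zero.mp h5 with h6 | h6
      · exact absurd h6 hc₂'
      · exact h6
    · exact absurd h5 hexp
  -- conclude u is constant
  have hfd0 : ∀ z, fderiv ℝ u z = 0 := by
    intro z
    have hz := hfzero z
    have hre : ux z = 0 ∧ uy z = 0 := by
      have h1 := congrArg Complex.re hz
      have h2 := congrArg Complex.im hz
      simp only [hf_def, Complex.sub_re, Complex.sub_im, Complex.real_smul, Complex.mul_re,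
        Complex.mul_im, Complex.one_re, Complex.one_im, Complex.I_re, Complex.I_im,
        Complex.ofReal_re, Complex.ofReal_im, Complex.zero_re, Complex.zero_im] at h1 h2
      constructor <;> nlinarith [h1, h2]
    refine clm_ext_complex (T := fderiv ℝ u z) (S := 0) ?_ ?_
    · simpa using hre.1
    · simpa using hre.2
  exact fun z => is_const_of_fderiv_eq_zero hudiff hfd0 z 0

/-- The Laplacian of a function on `ℝ²`, as the sum of second directional
derivatives along the standard basis. -/
noncomputable def laplacian2 (φ : EuclideanSpace ℝ (Fin 2) → ℝ)
    (x : EuclideanSpace ℝ (Fin 2)) : ℝ :=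
  ∑ i : Fin 2,
    fderiv ℝ (fun y => fderiv ℝ φ y (EuclideanSpace.single i 1)) x
      (EuclideanSpace.single i 1)

theorem stmt_2
    (φ : EuclideanSpace ℝ (Fin 2) → ℝ)
    (hφ : ContDiff ℝ 2 φ)
    (hharm : ∀ x, laplacian2 φ x = 0)
    (C₁ : ℝ) (hC₁ : 0 < C₁)
    (hgrowth : ∀ x : EuclideanSpace ℝ (Fin 2), 1 ≤ ‖x‖ → φ x ≤ C₁ * (1 + Real.log ‖x‖)) :
    ∃ c : ℝ, ∀ x, φ x = c := by
  set ψ : ℂ ≃ₗᵢ[ℝ] EuclideanSpace ℝ (Fin 2) :=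
    Complex.isometryOfOrthonormal (EuclideanSpace.basisFun (Fin 2) ℝ) with hψdef
  have hb : ∀ i : Fin 2, (EuclideanSpace.basisFun (Fin 2) ℝ) i = EuclideanSpace.single i 1 :=
    fun i => EuclideanSpace.basisFun_apply (Fin 2) ℝ i
  have hψ1 : ψ 1 = EuclideanSpace.single 0 1 := by
    rw [hψdef, Complex.isometryOfOrthonormal_apply]
    simp [hb]
  have hψI : ψ I = EuclideanSpace.single 1 1 := by
    rw [hψdef, Complex.isometryOfOrthonormal_apply]
    simp [hb]
  set L : ℂ →L[ℝ] EuclideanSpace ℝ (Fin 2) :=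
    (ψ.toContinuousLinearEquiv : ℂ →L[ℝ] EuclideanSpace ℝ (Fin 2)) with hLdef
  have hL : ∀ w, L w = ψ w := fun w => rfl
  set u : ℂ → ℝ := fun z => φ (ψ z) with hu_def
  have hu : ContDiff ℝ 2 u := hφ.comp L.contDiff
  have hφdiff : Differentiable ℝ φ := hφ.differentiable (by norm_num)
  have hφd : ContDiff ℝ 1 (fderiv ℝ φ) := hφ.fderiv_right le_rfl
  have hchain : ∀ (g : EuclideanSpace ℝ (Fin 2) → ℝ), Differentiable ℝ g → ∀ z v,
      fderiv ℝ (fun w => g (ψ w)) z v = fderiv ℝ g (ψ z) (ψ v) := by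
    intro g hg z v
    have h1 : HasFDerivAt (fun w => g (ψ w)) ((fderiv ℝ g (ψ z)).comp L) z :=
      (hg (ψ z)).hasFDerivAt.comp z L.hasFDerivAt
    rw [h1.fderiv]
    rfl
  have hufderiv : ∀ z v, fderiv ℝ u z v = fderiv ℝ φ (ψ z) (ψ v) := hchain φ hφdiff
  have hgi : ∀ c : EuclideanSpace ℝ (Fin 2), Differentiable ℝ (fun y => fderiv ℝ φ y c) := by
    intro c
    exact (ContinuousLinearMap.apply ℝ ℝ c).differentiable.comp (hφd.differentiable (by norm_num))
  have huharm : ∀ z, fderiv ℝ (fun w => fderiv ℝ u w 1) z 1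
      + fderiv ℝ (fun w => fderiv ℝ u w I) z I = 0 := by
    intro z
    have e1 : (fun w => fderiv ℝ u w 1)
        = fun w => (fun y => fderiv ℝ φ y (EuclideanSpace.single 0 1)) (ψ w) := by
      funext w
      rw [hufderiv w 1, hψ1]
    have e2 : (fun w => fderiv ℝ u w I)
        = fun w => (fun y => fderiv ℝ φ y (EuclideanSpace.single 1 1)) (ψ w) := by
      funext w
      rw [hufderiv w I, hψI]
    rw [e1, e2, hchain _ (hgi _) z 1, hchain _ (hgi _) z I, hψ1, hψI]
    have := hharm (ψ z)
    rwa [laplacian2, Fin.sum_univ_two] at this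
  have hugrowth : ∀ z : ℂ, 1 ≤ ‖z‖ → u z ≤ C₁ * (1 + Real.log ‖z‖) := by
    intro z hz
    have hnorm : ‖ψ z‖ = ‖z‖ := ψ.norm_map z
    have := hgrowth (ψ z) (by rwa [hnorm])
    rwa [hnorm] at this
  have hconst := key hu huharm hC₁ hugrowth
  refine ⟨u 0, fun x => ?_⟩
  have : φ x = u (ψ.symm x) := by rw [hu_def]; simp
  rw [this, hconst]
end
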